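/- For s in S(λ), the function s ↦ (1/s)·ζ[μ(λ_s)] is strictly increasing, where ζ[μ(λ_s)] = λ_s·μ(λ_s) - ψ(λ_s), μ(λ) = ψ'(λ), and λ_s is defined by μ(λ_s) = s·μ(λ). Specifically, its derivative with respect to s equals ψ(λ_s)/s², which is positive whenever λ_s > λ*. -/

import Mathlib

/-- For `s ∈ S(λ)`, the function `s ↦ (1/s)·ζ[μ(λ_s)] = (1/s)(λ_s ψ'(λ_s) - ψ(λ_s))` has
derivative `ψ(λ_s)/s²` (positive since `λ_s > λ*`), and is strictly increasing on `S(λ)`. -/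
theorem rate_over_s_strictMono (ψ : ℝ → ℝ) (lstar l : ℝ)
    (hlstar : 0 < lstar) (hll : lstar < l)
    (hψ0 : ψ 0 = 0) (hψstar : ψ lstar = 0)
    (hconv : StrictConvexOn ℝ Set.univ ψ)
    (hder : ∀ x, HasDerivAt ψ (deriv ψ x) x)
    (hder2 : ∀ x, HasDerivAt (deriv ψ) (deriv (deriv ψ) x) x)
    (hμpos : 0 < deriv ψ l)
    (S : Set ℝ) (hS : S ⊆ Set.Ici 1) (hSconv : Convex ℝ S)
    (lf : ℝ → ℝ)
    (hlf : ∀ s ∈ S, deriv ψ (lf s) = s * deriv ψ l)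
    (hlfgt : ∀ s ∈ S, l < lf s)
    (hψ'' : ∀ s ∈ S, 0 < deriv (deriv ψ) (lf s))
    (hlf' : ∀ s ∈ S, HasDerivAt lf (deriv ψ l / deriv (deriv ψ) (lf s)) s)
    (g : ℝ → ℝ)
    (hg : ∀ s, g s = (1 / s) * (lf s * deriv ψ (lf s) - ψ (lf s))) :
    (∀ s ∈ S, HasDerivAt g (ψ (lf s) / s ^ 2) s) ∧ StrictMonoOn g S := by
  -- ψ is positive past lstar
  have hψpos : ∀ x, lstar < x → 0 < ψ x := by
    intro x hx
    have hx0 : 0 < x := hlstar.trans hx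
    set b : ℝ := lstar / x with hb
    have hb0 : 0 < b := div_pos hlstar hx0
    have hb1 : b < 1 := (div_lt_one hx0).2 hx
    have ha0 : 0 < 1 - b := by linarith
    have hxne : (0:ℝ) ≠ x := hx0.ne
    have key := hconv.2 (Set.mem_univ (0:ℝ)) (Set.mem_univ x) hxne ha0 hb0 (by ring)
    have hcomb : (1 - b) • (0:ℝ) + b • x = lstar := by
      simp only [smul_eq_mul, mul_zero, zero_add, hb]
      field_simp
    rw [hcomb, hψstar, hψ0] at key
    simp only [smul_eq_mul, mul_zero, zero_add] at key
    nlinarith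
  -- the derivative statement
  have hda : ∀ s ∈ S, HasDerivAt g (ψ (lf s) / s ^ 2) s := by
    intro s hs
    have hs1 : (1:ℝ) ≤ s := hS hs
    have hs0 : s ≠ 0 := by linarith
    have hψ''pos := hψ'' s hs
    have hL := hlf' s hs
    -- derivative of ψ ∘ lf and ψ' ∘ lf
    have h1 : HasDerivAt (fun t => ψ (lf t))
        (deriv ψ (lf s) * (deriv ψ l / deriv (deriv ψ) (lf s))) s :=
      (hder (lf s)).comp s hL
    have h2 : HasDerivAt (fun t => deriv ψ (lf t))
        (deriv (deriv ψ) (lf s) * (deriv ψ l / deriv (deriv ψ) (lf s))) s :=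
      (hder2 (lf s)).comp s hL
    have h3 : HasDerivAt (fun t => lf t * deriv ψ (lf t) - ψ (lf t))
        ((deriv ψ l / deriv (deriv ψ) (lf s)) * deriv ψ (lf s)
          + lf s * (deriv (deriv ψ) (lf s) * (deriv ψ l / deriv (deriv ψ) (lf s)))
          - deriv ψ (lf s) * (deriv ψ l / deriv (deriv ψ) (lf s))) s :=
      (hL.mul h2).sub h1
    have hinv : HasDerivAt (fun t : ℝ => 1 / t) (-(1 / s ^ 2)) s := by
      simpa using (hasDerivAt_inv hs0)
    have h4 := hinv.mul h3
    have hgeq : g = fun t => (1 / t) * (lf t * deriv ψ (lf t) - ψ (lf t)) := funext hg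
    rw [hgeq]
    refine h4.congr_deriv ?_
    rw [hlf s hs]
    field_simp
    ring
  refine ⟨hda, ?_⟩
  apply strictMonoOn_of_hasDerivWithinAt_pos hSconv
    (fun x hx => ((hda x hx).continuousAt).continuousWithinAt)
    (fun x hx => ((hda x (interior_subset hx)).hasDerivWithinAt))
  intro x hx
  have hxS := interior_subset hx
  have hx1 : (1:ℝ) ≤ x := hS hxS
  have := hψpos (lf x) (hll.trans (hlfgt x hxS))
  positivity
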